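/- For every non-negative integer p and reals q ≥ 0, t > q, the function g(p,q;t) defined by the recursion g(p,q;t) = ((t−q)/(p−1/2)) g(p−1,q;t) + (1/((p−1)!(p−1/2)√π)) (t−1−q)^{p−1} χ_{t>q+1} with g(0,q;t) = χ_{0<t−q<1}/(√π√(t−q)) admits the closed form g(p,q;t) = Σ_{j=1}^{p} [2^j (2p−2j−1)!! / (√π (p−j)! (2p−1)!!)] (t−q−1)^{p−j} (t−q)^{j−1} χ_{t>q+1} + [2^p (t−q)^{p−1/2} / (√π (2p−1)!!)] χ_{0<t−q<1}. -/

import Mathlib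

open Real Finset

/-- `g(p,q;t)` defined by the first-order recursion
`g(p,q;t) = ((t-q)/(p-1/2)) g(p-1,q;t) + ((t-1-q)^{p-1}/((p-1)!(p-1/2)√π)) χ_{t>q+1}`
with base case `g(0,q;t) = χ_{0<t-q<1}/(√π √(t-q))`. -/
noncomputable def g : ℕ → ℝ → ℝ → ℝ
  | 0, q, t => (if 0 < t - q ∧ t - q < 1 then (1:ℝ) else 0) /
      (Real.sqrt Real.pi * Real.sqrt (t - q))
  | (p + 1), q, t =>
      ((t - q) / ((p + 1 : ℝ) - 1/2)) * g p q t +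
        (1 / ((p.factorial : ℝ) * ((p + 1 : ℝ) - 1/2) * Real.sqrt Real.pi)) *
          (t - 1 - q) ^ p * (if q + 1 < t then (1:ℝ) else 0)

lemma ddf_succ (p : ℕ) :
    Nat.doubleFactorial (2*(p+1)-1) = (2*p+1) * Nat.doubleFactorial (2*p-1) := by
  cases p with
  | zero => simp [Nat.doubleFactorial]
  | succ n =>
    have h1 : 2*(n+1+1)-1 = (2*(n+1)-1)+2 := by omega
    rw [h1, Nat.doubleFactorial_add_two]
    congr 1

theorem g_closed_form (p : ℕ) (q t : ℝ) (hq : 0 ≤ q) (ht : q < t) :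
    g p q t =
      (∑ j ∈ Finset.Icc 1 p,
          (2 ^ j * (Nat.doubleFactorial (2 * p - 2 * j - 1) : ℝ) /
              (Real.sqrt Real.pi * ((p - j).factorial : ℝ) *
                (Nat.doubleFactorial (2 * p - 1) : ℝ))) *
            (t - q - 1) ^ (p - j) * (t - q) ^ (j - 1) *
            (if q + 1 < t then (1:ℝ) else 0)) +
        (2 ^ p * (t - q) ^ ((p : ℝ) - 1/2) /
            (Real.sqrt Real.pi * (Nat.doubleFactorial (2 * p - 1) : ℝ))) *
          (if 0 < t - q ∧ t - q < 1 then (1:ℝ) else 0) := by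
  have hx : 0 < t - q := sub_pos.mpr ht
  have hs : Real.sqrt Real.pi ≠ 0 := ne_of_gt (Real.sqrt_pos.mpr Real.pi_pos)
  have hdf : ∀ n : ℕ, ((Nat.doubleFactorial n : ℝ)) ≠ 0 := fun n =>
    Nat.cast_ne_zero.mpr (Nat.doubleFactorial_pos n).ne'
  have hfac : ∀ n : ℕ, ((n.factorial : ℝ)) ≠ 0 := fun n =>
    Nat.cast_ne_zero.mpr n.factorial_ne_zero
  induction p with
  | zero =>
    simp only [g, Finset.Icc_self, Nat.zero_eq]
    rw [show Finset.Icc 1 0 = ∅ by rfl]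
    simp only [Finset.sum_empty, zero_add]
    rw [show ((0:ℕ):ℝ) - 1/2 = -(1/2 : ℝ) by norm_num, Real.rpow_neg hx.le,
      ← Real.sqrt_eq_rpow]
    have hsx : Real.sqrt (t - q) ≠ 0 := ne_of_gt (Real.sqrt_pos.mpr hx)
    simp [Nat.doubleFactorial]
    split_ifs with h
    · field_simp
    · simp
  | succ p ih =>
    rw [show g (p+1) q t = ((t - q) / ((p + 1 : ℝ) - 1/2)) * g p q t +
        (1 / ((p.factorial : ℝ) * ((p + 1 : ℝ) - 1/2) * Real.sqrt Real.pi)) *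
          (t - 1 - q) ^ p * (if q + 1 < t then (1:ℝ) else 0) from rfl, ih]
    have hc : ((p:ℝ) + 1) - 1/2 ≠ 0 := by
      have h0 : (0:ℝ) ≤ p := Nat.cast_nonneg p
      intro h; linarith
    rw [← Finset.Ico_add_one_right_eq_Icc, ← Finset.Ico_add_one_right_eq_Icc, Finset.sum_Ico_eq_sum_range,
      Finset.sum_Ico_eq_sum_range]
    rw [show p + 1 - 1 = p from rfl, show p + 1 + 1 - 1 = p + 1 from rfl]
    rw [Finset.sum_range_succ']
    rw [mul_add, Finset.mul_sum]
    have hsum : ∀ i ∈ Finset.range p,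
        ((t - q) / ((p + 1 : ℝ) - 1/2)) *
          ((2 ^ (1+i) * (Nat.doubleFactorial (2 * p - 2 * (1+i) - 1) : ℝ) /
              (Real.sqrt Real.pi * ((p - (1+i)).factorial : ℝ) *
                (Nat.doubleFactorial (2 * p - 1) : ℝ))) *
            (t - q - 1) ^ (p - (1+i)) * (t - q) ^ ((1+i) - 1) *
            (if q + 1 < t then (1:ℝ) else 0)) =
        (2 ^ (1+(i+1)) * (Nat.doubleFactorial (2 * (p+1) - 2 * (1+(i+1)) - 1) : ℝ) /
              (Real.sqrt Real.pi * (((p+1) - (1+(i+1))).factorial : ℝ) *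
                (Nat.doubleFactorial (2 * (p+1) - 1) : ℝ))) *
            (t - q - 1) ^ ((p+1) - (1+(i+1))) * (t - q) ^ ((1+(i+1)) - 1) *
            (if q + 1 < t then (1:ℝ) else 0) := by
      intro i hi
      have hip : i < p := Finset.mem_range.mp hi
      rw [show 2 * (p+1) - 2 * (1+(i+1)) - 1 = 2 * p - 2 * (1+i) - 1 by omega,
        show (p+1) - (1+(i+1)) = p - (1+i) by omega,
        show (1+(i+1)) - 1 = (1+i) by omega,
        show (1+i) - 1 = i by omega,
        ddf_succ]
      push_cast
      rw [show (1:ℕ) + i = i + 1 by omega]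
      rw [pow_succ (t - q) i]
      have h2 : (2*(p:ℝ)+1) ≠ 0 := by positivity
      rw [show ((p:ℝ) + 1) - 1/2 = (2*(p:ℝ)+1)/2 by ring]
      split_ifs
      · field_simp
        ring
      · ring
    rw [Finset.sum_congr rfl hsum]
    have hbase : ((t - q) / ((p + 1 : ℝ) - 1/2)) *
        ((2 ^ p * (t - q) ^ ((p : ℝ) - 1/2) /
            (Real.sqrt Real.pi * (Nat.doubleFactorial (2 * p - 1) : ℝ))) *
          (if 0 < t - q ∧ t - q < 1 then (1:ℝ) else 0)) =
        (2 ^ (p+1) * (t - q) ^ (((p+1:ℕ) : ℝ) - 1/2) /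
            (Real.sqrt Real.pi * (Nat.doubleFactorial (2 * (p+1) - 1) : ℝ))) *
          (if 0 < t - q ∧ t - q < 1 then (1:ℝ) else 0) := by
      rw [ddf_succ]
      rw [show (((p+1:ℕ) : ℝ)) - 1/2 = ((p:ℝ) - 1/2) + 1 by push_cast; ring,
        Real.rpow_add_one hx.ne']
      push_cast
      have h2 : (2*(p:ℝ)+1) ≠ 0 := by positivity
      rw [show ((p:ℝ) + 1) - 1/2 = (2*(p:ℝ)+1)/2 by ring]
      split_ifs
      · field_simp
        ring
      · ring
    have hone : (1 / ((p.factorial : ℝ) * ((p + 1 : ℝ) - 1/2) * Real.sqrt Real.pi)) *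
          (t - 1 - q) ^ p * (if q + 1 < t then (1:ℝ) else 0) =
        (2 ^ (1+0) * (Nat.doubleFactorial (2 * (p+1) - 2 * (1+0) - 1) : ℝ) /
              (Real.sqrt Real.pi * (((p+1) - (1+0)).factorial : ℝ) *
                (Nat.doubleFactorial (2 * (p+1) - 1) : ℝ))) *
            (t - q - 1) ^ ((p+1) - (1+0)) * (t - q) ^ ((1+0) - 1) *
            (if q + 1 < t then (1:ℝ) else 0) := by
      rw [show 2 * (p+1) - 2 * (1+0) - 1 = 2 * p - 1 by omega,
        show (p+1) - (1+0) = p by omega, ddf_succ]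
      push_cast
      rw [show t - 1 - q = t - q - 1 by ring]
      have h2 : (2*(p:ℝ)+1) ≠ 0 := by positivity
      rw [show ((p:ℝ) + 1) - 1/2 = (2*(p:ℝ)+1)/2 by ring]
      split_ifs
      · field_simp
      · ring
    rw [hbase, hone]
    ring
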